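/- Suppose F: ℝ^d → ℝ satisfies sup_{|e|=1} ∫_1^∞ |F(u·e)|/u du < ∞ and |F(x)| ≤ F(0) for all x. Then for all x ∈ ℝ^d \ {0} and all a ≥ 1: ∫_a^∞ |F(u·x)|/u du ≤ F(0) · max(ln(1/(a|x|)), 0) + C, where C = sup_{|e|=1} ∫_1^∞ |F(u·e)|/u du. -/

import Mathlib

open MeasureTheory Filter Set

/-- If `sup_{|e|=1} ∫_1^∞ |F(u·e)|/u du ≤ C` and `|F(x)| ≤ F(0)`, then for every `x ≠ 0`
and `a ≥ 1`: `∫_a^∞ |F(u·x)|/u du ≤ F(0)·ln_+(1/(a|x|)) + C`. -/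
theorem stmt_3 (d : ℕ) (F : EuclideanSpace ℝ (Fin d) → ℝ) (C : ℝ)
    (hmeas : Measurable F)
    (hC : ∀ e : EuclideanSpace ℝ (Fin d), ‖e‖ = 1 →
      (∫ u in Set.Ioi (1 : ℝ), |F (u • e)| / u) ≤ C)
    (hbound : ∀ x, |F x| ≤ F 0) :
    ∀ x : EuclideanSpace ℝ (Fin d), x ≠ 0 → ∀ a : ℝ, 1 ≤ a →
      (∫ u in Set.Ioi a, |F (u • x)| / u) ≤
        F 0 * max (Real.log (1 / (a * ‖x‖))) 0 + C := by
  intro x hx a ha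
  have hF0 : 0 ≤ F 0 := (abs_nonneg _).trans (hbound 0)
  set e : EuclideanSpace ℝ (Fin d) := ‖x‖⁻¹ • x with he
  have hxn : (0:ℝ) < ‖x‖ := norm_pos_iff.mpr hx
  have hene : ‖e‖ = 1 := by
    rw [he, norm_smul, norm_inv, norm_norm, inv_mul_cancel₀ hxn.ne']
  set g : ℝ → ℝ := fun v => |F (v • e)| / v with hg
  have hgmeas : Measurable g :=
    ((hmeas.comp (measurable_id.smul_const e)).abs.div measurable_id)
  have hgnn : ∀ v ∈ Ioi (0:ℝ), 0 ≤ g v := fun v hv =>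
    div_nonneg (abs_nonneg _) (le_of_lt hv)
  -- change of variables
  have key : (∫ u in Set.Ioi a, |F (u • x)| / u) = ∫ v in Ioi (a * ‖x‖), g v := by
    have h1 : ∀ u : ℝ, |F (u • x)| / u = ‖x‖ * g (u * ‖x‖) := by
      intro u
      have : (u * ‖x‖) • e = u • x := by
        rw [he, smul_smul, mul_assoc, mul_inv_cancel₀ hxn.ne', mul_one]
      rw [hg]; simp only [this]
      rw [mul_div_assoc']
      rw [mul_comm ‖x‖ _, mul_div_mul_right _ _ hxn.ne']
    simp_rw [h1]
    rw [integral_const_mul, integral_comp_mul_right_Ioi g a hxn, smul_eq_mul,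
      ← mul_assoc, mul_inv_cancel₀ hxn.ne', one_mul]
  rw [key]
  set b : ℝ := a * ‖x‖ with hb
  have hbpos : 0 < b := mul_pos (lt_of_lt_of_le one_pos ha) hxn
  have hCge : (∫ v in Ioi (1:ℝ), g v) ≤ C := hC e hene
  have hbnd : ∀ v ∈ Ioi (0:ℝ), g v ≤ F 0 / v := by
    intro v hv
    have hv' : (0:ℝ) < v := hv
    show |F (v • e)| / v ≤ F 0 / v
    gcongr
    exact hbound _
  -- case on integrability on Ioi 1
  by_cases hint : IntegrableOn g (Ioi 1) volume
  · -- integrable case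
    have hC0 : (0:ℝ) ≤ C := le_trans (setIntegral_nonneg measurableSet_Ioi
      (fun v hv => hgnn v (lt_trans one_pos hv))) hCge
    rcases le_or_gt 1 b with hb1 | hb1
    · -- b ≥ 1 : max term is 0
      have hmax : max (Real.log (1 / b)) 0 = 0 := by
        apply max_eq_right
        apply Real.log_nonpos (by positivity)
        rw [div_le_one hbpos]; exact hb1
      rw [hmax, mul_zero, zero_add]
      refine le_trans (setIntegral_mono_set hint ?_ ?_) hCge
      · filter_upwards [ae_restrict_mem measurableSet_Ioi] with v hv
        exact hgnn v (show (0:ℝ) < v from lt_trans one_pos hv)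
      · exact HasSubset.Subset.eventuallyLE (Ioi_subset_Ioi hb1)
    · -- b < 1 : split
      have hIoc : IntegrableOn g (Ioc b 1) volume := by
        refine Integrable.mono'
          ((integrableOn_const measure_Ioc_lt_top.ne) :
            IntegrableOn (fun _ => F 0 / b) (Ioc b 1) volume)
          hgmeas.aestronglyMeasurable ?_
        filter_upwards [ae_restrict_mem measurableSet_Ioc] with v hv
        rw [Real.norm_eq_abs, abs_of_nonneg (hgnn v (lt_of_lt_of_le hbpos hv.1.le))]
        exact (hbnd v (lt_of_lt_of_le hbpos hv.1.le)).trans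
          (div_le_div_of_nonneg_left hF0 hbpos hv.1.le)
      have hsplit : (∫ v in Ioi b, g v) = (∫ v in Ioc b 1, g v) + ∫ v in Ioi 1, g v := by
        rw [← setIntegral_union ?_ measurableSet_Ioi hIoc hint, Ioc_union_Ioi_eq_Ioi hb1.le]
        rw [Set.disjoint_left]; intro v hv1 hv2; exact absurd hv2 (not_lt.mpr hv1.2)
      rw [hsplit]
      have h2 : (∫ v in Ioc b 1, g v) ≤ F 0 * Real.log (1 / b) := by
        have := setIntegral_mono_on hIoc ?_ measurableSet_Ioc
          (fun v hv => hbnd v (lt_of_lt_of_le hbpos hv.1.le))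
        · refine this.trans ?_
          have : (∫ v in Ioc b 1, F 0 / v) = ∫ v in b..1, F 0 * v⁻¹ := by
            rw [intervalIntegral.integral_of_le hb1.le]
            simp [div_eq_mul_inv]
          have hnotin : (0:ℝ) ∉ Set.uIcc b 1 := by
            rw [Set.uIcc_of_le hb1.le]
            intro h
            exact absurd h.1 (not_le.mpr hbpos)
          rw [this, intervalIntegral.integral_const_mul, integral_inv hnotin]
        · refine (Integrable.mono'
            ((integrableOn_const measure_Ioc_lt_top.ne) :
              IntegrableOn (fun _ => F 0 / b) (Ioc b 1) volume)
            (measurable_const.div measurable_id).aestronglyMeasurable ?_)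
          filter_upwards [ae_restrict_mem measurableSet_Ioc] with v hv
          rw [Real.norm_eq_abs, abs_of_nonneg (div_nonneg hF0 (lt_of_lt_of_le hbpos hv.1.le).le)]
          gcongr
          exact hv.1.le
      have hmax : max (Real.log (1 / b)) 0 = Real.log (1 / b) := by
        apply max_eq_left
        apply Real.log_nonneg
        rw [le_div_iff₀ hbpos, one_mul]; exact hb1.le
      rw [hmax]
      exact add_le_add h2 hCge
  · -- non-integrable case: both integrals are 0
    have hC0 : (0:ℝ) ≤ C := by
      rw [integral_undef hint] at hCge; exact hCge
    have hint' : ¬ IntegrableOn g (Ioi b) volume := by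
      intro h
      apply hint
      rcases le_or_gt 1 b with hb1 | hb1
      · have hIoc : IntegrableOn g (Ioc 1 b) volume := by
          refine Integrable.mono'
            ((integrableOn_const measure_Ioc_lt_top.ne) :
              IntegrableOn (fun _ => F 0) (Ioc 1 b) volume)
            hgmeas.aestronglyMeasurable ?_
          filter_upwards [ae_restrict_mem measurableSet_Ioc] with v hv
          rw [Real.norm_eq_abs, abs_of_nonneg (hgnn v (lt_of_lt_of_le one_pos hv.1.le))]
          refine (hbnd v (lt_of_lt_of_le one_pos hv.1.le)).trans ?_
          rw [div_le_iff₀ (lt_of_lt_of_le one_pos hv.1.le)]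
          nlinarith [hv.1.le, hF0]
        have := hIoc.union h
        rwa [Ioc_union_Ioi_eq_Ioi hb1] at this
      · exact h.mono_set (Ioi_subset_Ioi hb1.le)
    rw [integral_undef hint']
    positivity
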